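/- Let γ > 0 and N be the solution operator of v'' − γv − v³ + w = 0 on (0,∞) with Neumann condition at 0 and decay at infinity. Then for any w₁, w₂ ∈ L^2(0,∞), ‖Nw₂ − Nw₁‖_{H^1(0,∞)} ≤ max{1, 1/γ} · ‖w₂ − w₁‖_{L^2(0,∞)}. -/

import Mathlib

open MeasureTheory Set Filter

/-- `IsSol γ w v v' v''` : `v` solves `v'' − γv − v³ + w = 0` on `[0,∞)` with Neumann
condition at `0` and decay at infinity, with `v` and `v'` in `L²(0,∞)`. -/
def IsSol (γ : ℝ) (w v v' v'' : ℝ → ℝ) : Prop :=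
  (∀ x ∈ Ici (0:ℝ), HasDerivAt v (v' x) x) ∧
  (∀ x ∈ Ici (0:ℝ), HasDerivAt v' (v'' x) x) ∧
  (∀ x ∈ Ici (0:ℝ), v'' x - γ * v x - v x ^ 3 + w x = 0) ∧
  v' 0 = 0 ∧ Tendsto v atTop (nhds 0) ∧
  MemLp v 2 (volume.restrict (Ioi (0:ℝ))) ∧
  MemLp v' 2 (volume.restrict (Ioi (0:ℝ)))



lemma my_L2_mul {μ : Measure ℝ} {f g : ℝ → ℝ} (hf : MemLp f 2 μ) (hg : MemLp g 2 μ) :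
    Integrable (fun x => f x * g x) μ := by
  refine Integrable.mono' (hf.integrable_sq.add hg.integrable_sq) (hf.1.mul hg.1)
    (ae_of_all _ fun x => ?_)
  simp only [Pi.add_apply]
  rw [Real.norm_eq_abs, abs_mul]
  nlinarith [sq_nonneg (|f x| - |g x|), abs_nonneg (f x), abs_nonneg (g x),
    sq_abs (f x), sq_abs (g x)]

lemma my_sq_zero {μ : Measure ℝ} {f : ℝ → ℝ} (hf : MemLp f 2 μ)
    (h : ∫ x, f x ^ 2 ∂μ = 0) : f =ᵐ[μ] 0 := by
  have hfz : (fun x => f x ^ 2) =ᵐ[μ] 0 :=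
    (integral_eq_zero_iff_of_nonneg (fun x => sq_nonneg _) hf.integrable_sq).1 h
  filter_upwards [hfz] with x hx
  simp only [Pi.zero_apply] at hx ⊢
  exact pow_eq_zero_iff (n := 2) (by norm_num) |>.1 hx

lemma my_CS {μ : Measure ℝ} {f g : ℝ → ℝ} (hf : MemLp f 2 μ) (hg : MemLp g 2 μ) :
    ∫ x, f x * g x ∂μ ≤
      Real.sqrt (∫ x, f x ^ 2 ∂μ) * Real.sqrt (∫ x, g x ^ 2 ∂μ) := by
  set A := ∫ x, f x ^ 2 ∂μ with hA
  set B := ∫ x, g x ^ 2 ∂μ with hB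
  have hA0 : 0 ≤ A := integral_nonneg fun x => sq_nonneg _
  have hB0 : 0 ≤ B := integral_nonneg fun x => sq_nonneg _
  set sA := Real.sqrt A with hsA
  set sB := Real.sqrt B with hsB
  have hsA0 : 0 ≤ sA := Real.sqrt_nonneg _
  have hsB0 : 0 ≤ sB := Real.sqrt_nonneg _
  have hsA2 : sA ^ 2 = A := Real.sq_sqrt hA0
  have hsB2 : sB ^ 2 = B := Real.sq_sqrt hB0
  have hmul := my_L2_mul hf hg
  have i2 : Integrable (fun x => 2 * (sA * sB) * (f x * g x)) μ := hmul.const_mul _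
  have i1 : Integrable (fun x => sB ^ 2 * f x ^ 2 - 2 * (sA * sB) * (f x * g x)) μ :=
    (hf.integrable_sq.const_mul _).sub i2
  have i3 : Integrable (fun x => sA ^ 2 * g x ^ 2) μ := hg.integrable_sq.const_mul _
  have key : 0 ≤ sB ^ 2 * A - 2 * (sA * sB) * (∫ x, f x * g x ∂μ) + sA ^ 2 * B := by
    have h1 : (0:ℝ) ≤ ∫ x, (sB * f x - sA * g x) ^ 2 ∂μ :=
      integral_nonneg fun x => sq_nonneg _
    have hfe : (fun x => (sB * f x - sA * g x) ^ 2)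
        = fun x => (sB ^ 2 * f x ^ 2 - 2 * (sA * sB) * (f x * g x)) + sA ^ 2 * g x ^ 2 := by
      funext x; ring
    rw [hfe, integral_add i1 i3, integral_sub (hf.integrable_sq.const_mul _) i2,
      integral_const_mul, integral_const_mul, integral_const_mul] at h1
    linarith
  rcases eq_or_lt_of_le (mul_nonneg hsA0 hsB0) with h0 | hpos
  · have hz : (∫ x, f x * g x ∂μ) = 0 := by
      have hfg0 : (fun x => f x * g x) =ᵐ[μ] 0 := by
        rcases mul_eq_zero.1 h0.symm with h | h
        · have hAz : A = 0 := (Real.sqrt_eq_zero hA0).1 h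
          filter_upwards [my_sq_zero hf hAz] with x hx
          simp only [Pi.zero_apply] at hx ⊢; simp [hx]
        · have hBz : B = 0 := (Real.sqrt_eq_zero hB0).1 h
          filter_upwards [my_sq_zero hg hBz] with x hx
          simp only [Pi.zero_apply] at hx ⊢; simp [hx]
      rw [integral_congr_ae hfg0]; simp
    rw [hz]; positivity
  · have h2 : (sA * sB) * (∫ x, f x * g x ∂μ) ≤ (sA * sB) * (sA * sB) := by nlinarith
    exact le_of_mul_le_mul_left h2 hpos


lemma my_bdd {f : ℝ → ℝ} (hc : ContinuousOn f (Ici 0))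
    (hlim : Tendsto f atTop (nhds 0)) : ∃ C, 0 ≤ C ∧ ∀ x, 0 ≤ x → |f x| ≤ C := by
  have h1 : ∀ᶠ x in atTop, |f x| < 1 := by
    have := Metric.tendsto_nhds.1 hlim 1 one_pos
    simpa [Real.dist_eq] using this
  obtain ⟨R, hR⟩ := eventually_atTop.1 h1
  obtain ⟨C0, hC0⟩ := (isCompact_Icc : IsCompact (Icc 0 (max R 0))).exists_bound_of_continuousOn
    (hc.mono (fun x hx => hx.1))
  refine ⟨max C0 1, le_trans (by norm_num) (le_max_right _ _), fun x hx => ?_⟩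
  by_cases hxR : x ≤ max R 0
  · exact le_trans (by simpa [Real.norm_eq_abs] using hC0 x ⟨hx, hxR⟩) (le_max_left _ _)
  · exact le_trans (le_of_lt (hR x (le_trans (le_max_left _ _) (le_of_not_ge hxR))))
      (le_max_right _ _)

/-- If `g^2` is integrable on `(0,∞)` and tends to `L` at infinity, then `L = 0`. -/
lemma my_lim_zero {g : ℝ → ℝ} {L : ℝ}
    (hg : IntegrableOn (fun x => g x ^ 2) (Ioi (0:ℝ)))
    (hlim : Tendsto (fun x => g x ^ 2) atTop (nhds L)) : L = 0 := by
  by_contra hL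
  have hL0 : 0 ≤ L := le_of_tendsto_of_tendsto' tendsto_const_nhds hlim
    (fun x => sq_nonneg _) |>.trans_eq rfl
  have hLpos : 0 < L := lt_of_le_of_ne hL0 (Ne.symm hL)
  have h2 : ∀ᶠ x in atTop, L / 2 ≤ g x ^ 2 :=
    hlim.eventually (eventually_ge_nhds (by linarith : L / 2 < L))
  obtain ⟨R, hR⟩ := eventually_atTop.1 h2
  set M := max R 1
  have hset : IntegrableOn (fun x => g x ^ 2) (Ioi M) := by
    refine hg.mono_set (fun x hx => ?_)
    have : (0:ℝ) < M := lt_of_lt_of_le one_pos (le_max_right _ _)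
    exact lt_trans this hx
  have hconst : IntegrableOn (fun _ : ℝ => L / 2) (Ioi M) := by
    refine Integrable.mono' hset aestronglyMeasurable_const
      ((ae_restrict_iff' measurableSet_Ioi).2 (ae_of_all _ fun x hx => ?_))
    rw [Real.norm_eq_abs, abs_of_nonneg (by positivity)]
    exact hR x (le_of_lt (lt_of_le_of_lt (le_max_left _ _) hx))
  have := (integrable_const_iff (c := L / 2)).1 hconst
  rcases this with h | h
  · exact absurd h (by positivity)
  · have h := h.measure_univ_lt_top
    simp [Measure.restrict_apply_univ, Real.volume_Ioi] at h

lemma my_main {γ : ℝ} (hγ : 0 < γ) (u u' u'' f q : ℝ → ℝ)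
    (hud : ∀ x ∈ Ici (0:ℝ), HasDerivAt u (u' x) x)
    (hu'd : ∀ x ∈ Ici (0:ℝ), HasDerivAt u' (u'' x) x)
    (hode : ∀ x ∈ Ici (0:ℝ), u'' x = γ * u x + q x * u x - f x)
    (hq0 : ∀ x, 0 ≤ q x)
    (hqc : ContinuousOn q (Ici 0))
    (hqb : ∃ C, ∀ x, 0 ≤ x → |q x| ≤ C)
    (hn : u' 0 = 0)
    (htop : Tendsto u atTop (nhds 0))
    (hu2 : MemLp u 2 (volume.restrict (Ioi (0:ℝ))))
    (hu'2 : MemLp u' 2 (volume.restrict (Ioi (0:ℝ))))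
    (hf2 : MemLp f 2 (volume.restrict (Ioi (0:ℝ)))) :
    Real.sqrt ((∫ x in Ioi (0:ℝ), u x ^ 2) + ∫ x in Ioi (0:ℝ), u' x ^ 2) ≤
      max 1 (1 / γ) * Real.sqrt (∫ x in Ioi (0:ℝ), f x ^ 2) := by
  set μ := volume.restrict (Ioi (0:ℝ)) with hμ
  -- measurability / MemLp facts
  obtain ⟨Cq, hCq⟩ := hqb
  have hqu2 : MemLp (fun x => q x * u x) 2 μ := by
    refine MemLp.of_le_mul (c := Cq) hu2
      (((hqc.mono (fun x hx => le_of_lt hx)).aestronglyMeasurable measurableSet_Ioi).mul hu2.1)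
      (((ae_restrict_iff' measurableSet_Ioi).2 (ae_of_all _ fun x hx => ?_)))
    rw [Real.norm_eq_abs, Real.norm_eq_abs, abs_mul]
    exact mul_le_mul_of_nonneg_right (hCq x (le_of_lt hx)) (abs_nonneg _)
  have hode' : u'' =ᵐ[μ] fun x => γ * u x + q x * u x - f x :=
    (ae_restrict_iff' measurableSet_Ioi).2 (ae_of_all _ fun x (hx : x ∈ Ioi (0:ℝ)) => hode x (mem_Ici.2 (le_of_lt (mem_Ioi.1 hx))))
  have hu''2 : MemLp u'' 2 μ :=
    MemLp.ae_eq hode'.symm (((hu2.const_mul γ).add hqu2).sub hf2)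
  -- integrable products
  have int_u'u'' : Integrable (fun x => u' x * u'' x) μ := my_L2_mul hu'2 hu''2
  have int_fu : Integrable (fun x => f x * u x) μ := my_L2_mul hf2 hu2
  have int_usq : Integrable (fun x => u x ^ 2) μ := hu2.integrable_sq
  have int_u'sq : Integrable (fun x => u' x ^ 2) μ := hu'2.integrable_sq
  have int_qusq : Integrable (fun x => q x * u x ^ 2) μ := by
    have := my_L2_mul hqu2 hu2
    refine this.congr (ae_of_all _ fun x => by ring)
  -- transfer to interval integrability
  have toInt : ∀ (g : ℝ → ℝ), Integrable g μ → ∀ R : ℝ, 0 ≤ R →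
      IntervalIntegrable g volume 0 R := by
    intro g hg R hR
    have hg' : IntegrableOn g (Ioi 0) volume := hg
    exact (intervalIntegrable_iff_integrableOn_Ioc_of_le hR).2
      (hg'.mono_set Ioc_subset_Ioi_self)
  -- FTC for u'^2
  have ftc1 : ∀ R : ℝ, 0 ≤ R →
      (u' R) ^ 2 = ∫ x in (0:ℝ)..R, 2 * (u' x * u'' x) := by
    intro R hR
    have hIcc : uIcc (0:ℝ) R = Icc 0 R := uIcc_of_le hR
    have h := intervalIntegral.integral_eq_sub_of_hasDerivAt
      (f := fun x => u' x ^ 2) (f' := fun x => 2 * (u' x * u'' x))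
      (fun x hx => by
        have hx' : x ∈ Ici (0:ℝ) := (hIcc ▸ hx).1
        have := (hu'd x hx').pow 2
        refine this.congr_deriv ?_; ring)
      (toInt _ (int_u'u''.const_mul 2) R hR)
    rw [h]; simp [hn]
  -- the limit of u'^2
  have tlim : Tendsto (fun R => ∫ x in (0:ℝ)..R, 2 * (u' x * u'' x)) atTop
      (nhds (∫ x in Ioi (0:ℝ), 2 * (u' x * u'' x))) :=
    intervalIntegral_tendsto_integral_Ioi 0 (int_u'u''.const_mul 2) tendsto_id
  have tsq : Tendsto (fun R => (u' R) ^ 2) atTop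
      (nhds (∫ x in Ioi (0:ℝ), 2 * (u' x * u'' x))) := by
    refine tlim.congr' ?_
    filter_upwards [eventually_ge_atTop (0:ℝ)] with R hR
    exact (ftc1 R hR).symm
  have hI0 : (∫ x in Ioi (0:ℝ), 2 * (u' x * u'' x)) = 0 :=
    my_lim_zero (hu'2.integrable_sq) tsq
  have tsq0 : Tendsto (fun R => (u' R) ^ 2) atTop (nhds 0) := hI0 ▸ tsq
  -- boundary term tends to zero
  have huu' : Tendsto (fun R => u R * u' R) atTop (nhds 0) := by
    have habs : Tendsto (fun R => |u R| * Real.sqrt ((u' R) ^ 2)) atTop (nhds 0) := by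
      have h1 : Tendsto (fun R => |u R|) atTop (nhds 0) := by
        simpa using htop.abs
      have h2 : Tendsto (fun R => Real.sqrt ((u' R) ^ 2)) atTop (nhds 0) := by
        have := (Real.continuous_sqrt.tendsto 0).comp tsq0
        simpa [Function.comp_def] using this
      simpa using h1.mul h2
    refine squeeze_zero_norm (fun R => ?_) habs
    rw [Real.norm_eq_abs, abs_mul, Real.sqrt_sq_eq_abs]
  -- energy identity
  have int_g0 : Integrable (fun x => u' x ^ 2 + γ * u x ^ 2 + q x * u x ^ 2) μ :=
    (int_u'sq.add (int_usq.const_mul γ)).add int_qusq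
  have energy : ∀ R : ℝ, 0 ≤ R →
      (∫ x in (0:ℝ)..R, (u' x ^ 2 + γ * u x ^ 2 + q x * u x ^ 2))
        = u R * u' R + ∫ x in (0:ℝ)..R, f x * u x := by
    intro R hR
    have hIcc : uIcc (0:ℝ) R = Icc 0 R := uIcc_of_le hR
    have hder : ∀ x ∈ uIcc (0:ℝ) R, HasDerivAt (fun y => u y * u' y)
        ((u' x ^ 2 + γ * u x ^ 2 + q x * u x ^ 2) - f x * u x) x := by
      intro x hx
      have hx' : x ∈ Ici (0:ℝ) := (hIcc ▸ hx).1
      have := (hud x hx').mul (hu'd x hx')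
      refine this.congr_deriv ?_
      rw [hode x hx']; ring
    have hint : IntervalIntegrable
        (fun x => (u' x ^ 2 + γ * u x ^ 2 + q x * u x ^ 2) - f x * u x) volume 0 R :=
      toInt _ (int_g0.sub int_fu) R hR
    have h := intervalIntegral.integral_eq_sub_of_hasDerivAt hder hint
    rw [intervalIntegral.integral_sub (toInt _ int_g0 R hR) (toInt _ int_fu R hR)] at h
    rw [hn] at h
    have h2 : (∫ x in (0:ℝ)..R, (u' x ^ 2 + γ * u x ^ 2 + q x * u x ^ 2))
        - ∫ x in (0:ℝ)..R, f x * u x = u R * u' R := by rw [h]; ring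
    linarith [h2]
  -- pass to the limit
  set J := ∫ x in Ioi (0:ℝ), f x * u x with hJ
  have tRHS : Tendsto (fun R => u R * u' R + ∫ x in (0:ℝ)..R, f x * u x) atTop (nhds J) := by
    have := huu'.add (intervalIntegral_tendsto_integral_Ioi 0 int_fu tendsto_id)
    simpa using this
  have tLHS : Tendsto (fun R => ∫ x in (0:ℝ)..R, (u' x ^ 2 + γ * u x ^ 2 + q x * u x ^ 2))
      atTop (nhds (∫ x in Ioi (0:ℝ), (u' x ^ 2 + γ * u x ^ 2 + q x * u x ^ 2))) :=
    intervalIntegral_tendsto_integral_Ioi 0 int_g0 tendsto_id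
  have hident : (∫ x in Ioi (0:ℝ), (u' x ^ 2 + γ * u x ^ 2 + q x * u x ^ 2)) = J := by
    refine tendsto_nhds_unique tLHS (tRHS.congr' ?_)
    filter_upwards [eventually_ge_atTop (0:ℝ)] with R hR
    exact (energy R hR).symm
  -- split the integral
  set A := ∫ x in Ioi (0:ℝ), u x ^ 2 with hA
  set B := ∫ x in Ioi (0:ℝ), u' x ^ 2 with hB
  have hsplit : (∫ x in Ioi (0:ℝ), (u' x ^ 2 + γ * u x ^ 2 + q x * u x ^ 2))
      = B + γ * A + ∫ x in Ioi (0:ℝ), q x * u x ^ 2 := by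
    have iγ : Integrable (fun x => γ * u x ^ 2) μ := int_usq.const_mul γ
    have i12 : Integrable (fun x => u' x ^ 2 + γ * u x ^ 2) μ := int_u'sq.add iγ
    rw [integral_add i12 int_qusq, integral_add int_u'sq iγ, integral_const_mul]
  have hP0 : 0 ≤ ∫ x in Ioi (0:ℝ), q x * u x ^ 2 :=
    integral_nonneg fun x => mul_nonneg (hq0 x) (sq_nonneg _)
  have hkey : γ * A + B ≤ J := by
    have := hident
    rw [hsplit] at this
    linarith
  -- Cauchy-Schwarz
  set F := Real.sqrt (∫ x in Ioi (0:ℝ), f x ^ 2) with hF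
  have hCS : J ≤ F * Real.sqrt A := my_CS hf2 hu2
  -- final arithmetic
  have hA0 : 0 ≤ A := integral_nonneg fun x => sq_nonneg _
  have hB0 : 0 ≤ B := integral_nonneg fun x => sq_nonneg _
  have hF0 : 0 ≤ F := Real.sqrt_nonneg _
  set M := max 1 (1/γ) with hM
  have hM1 : 1 ≤ M := le_max_left _ _
  have hMγ : 1 ≤ M * γ := by
    rw [hM]
    calc 1 = (1/γ) * γ := by field_simp
    _ ≤ max 1 (1/γ) * γ := mul_le_mul_of_nonneg_right (le_max_right _ _) (le_of_lt hγ)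
  set s := Real.sqrt A with hs
  have hs0 : 0 ≤ s := Real.sqrt_nonneg _
  have hs2 : s ^ 2 = A := Real.sq_sqrt hA0
  -- s ≤ M * F
  have hsMF : s ≤ M * F := by
    by_contra hcon
    push_neg at hcon
    have hspos : 0 < s := lt_of_le_of_lt (mul_nonneg (by linarith) hF0) hcon
    have h1 : γ * s ^ 2 ≤ F * s := by nlinarith [hkey, hCS, hB0]
    have h2 : γ * s ≤ F := by
      have := (mul_le_mul_iff_of_pos_right hspos).1 (by nlinarith [h1] : (γ * s) * s ≤ F * s)
      exact this
    nlinarith [hMγ, hF0, hγ]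
  have hAB : A + B ≤ (M * F) ^ 2 := by
    have h3 : A + B ≤ M * (γ * A + B) := by nlinarith [hA0, hB0, hM1, hMγ, hγ]
    have h4 : M * (γ * A + B) ≤ M * (F * s) :=
      mul_le_mul_of_nonneg_left (le_trans hkey hCS) (by linarith)
    nlinarith [hsMF, hF0, hs0, mul_nonneg (mul_nonneg (by linarith : (0:ℝ) ≤ M) hF0) hs0]
  calc Real.sqrt (A + B) ≤ Real.sqrt ((M * F) ^ 2) := Real.sqrt_le_sqrt hAB
  _ = M * F := Real.sqrt_sq (by positivity)

/-- For `w₁, w₂ ∈ L²(0,∞)`,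
`‖Nw₂ − Nw₁‖_{H¹(0,∞)} ≤ max{1, 1/γ} ‖w₂ − w₁‖_{L²(0,∞)}`. -/
theorem statement7
    (γ : ℝ) (hγ : 0 < γ) (w₁ w₂ v₁ v₁' v₁'' v₂ v₂' v₂'' : ℝ → ℝ)
    (hw₁ : MemLp w₁ 2 (volume.restrict (Ioi (0:ℝ))))
    (hw₂ : MemLp w₂ 2 (volume.restrict (Ioi (0:ℝ))))
    (hsol₁ : IsSol γ w₁ v₁ v₁' v₁'')
    (hsol₂ : IsSol γ w₂ v₂ v₂' v₂'') :
    Real.sqrt ((∫ x in Ioi (0:ℝ), (v₂ x - v₁ x) ^ 2) +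
        ∫ x in Ioi (0:ℝ), (v₂' x - v₁' x) ^ 2) ≤
      max 1 (1 / γ) * Real.sqrt (∫ x in Ioi (0:ℝ), (w₂ x - w₁ x) ^ 2) := by
  obtain ⟨hd₁, hd₁', heq₁, hn₁, hl₁, hm₁, hm₁'⟩ := hsol₁
  obtain ⟨hd₂, hd₂', heq₂, hn₂, hl₂, hm₂, hm₂'⟩ := hsol₂
  have cont₁ : ContinuousOn v₁ (Ici 0) :=
    fun x hx => ((hd₁ x hx).continuousAt).continuousWithinAt
  have cont₂ : ContinuousOn v₂ (Ici 0) :=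
    fun x hx => ((hd₂ x hx).continuousAt).continuousWithinAt
  obtain ⟨C₁, hC₁0, hC₁⟩ := my_bdd cont₁ hl₁
  obtain ⟨C₂, hC₂0, hC₂⟩ := my_bdd cont₂ hl₂
  have hu2 : MemLp (fun x => v₂ x - v₁ x) 2 (volume.restrict (Ioi (0:ℝ))) := hm₂.sub hm₁
  have hu'2 : MemLp (fun x => v₂' x - v₁' x) 2 (volume.restrict (Ioi (0:ℝ))) := hm₂'.sub hm₁'
  have hf2 : MemLp (fun x => w₂ x - w₁ x) 2 (volume.restrict (Ioi (0:ℝ))) := hw₂.sub hw₁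
  exact my_main hγ (fun x => v₂ x - v₁ x) (fun x => v₂' x - v₁' x)
    (fun x => v₂'' x - v₁'' x) (fun x => w₂ x - w₁ x)
    (fun x => v₂ x ^ 2 + v₂ x * v₁ x + v₁ x ^ 2)
    (fun x hx => (hd₂ x hx).sub (hd₁ x hx))
    (fun x hx => (hd₂' x hx).sub (hd₁' x hx))
    (fun x hx => by
      have e1 := heq₁ x hx
      have e2 := heq₂ x hx
      linear_combination e2 - e1)
    (fun x => by nlinarith [sq_nonneg (v₂ x + v₁ x), sq_nonneg (v₂ x), sq_nonneg (v₁ x)])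
    (((cont₂.pow 2).add (cont₂.mul cont₁)).add (cont₁.pow 2))
    (⟨C₂ ^ 2 + C₂ * C₁ + C₁ ^ 2, fun x hx => by
      have h1 := hC₁ x hx
      have h2 := hC₂ x hx
      have e : |v₂ x ^ 2 + v₂ x * v₁ x + v₁ x ^ 2|
          ≤ |v₂ x ^ 2| + |v₂ x * v₁ x| + |v₁ x ^ 2| := abs_add_three _ _ _
      rw [abs_mul, abs_pow, abs_pow] at e
      nlinarith [abs_nonneg (v₁ x), abs_nonneg (v₂ x),
        mul_le_mul h2 h2 (abs_nonneg _) hC₂0, mul_le_mul h1 h1 (abs_nonneg _) hC₁0,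
        mul_le_mul h2 h1 (abs_nonneg _) hC₂0]⟩)
    (by simp [hn₂, hn₁])
    (by simpa using hl₂.sub hl₁)
    hu2 hu'2 hf2
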